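/- Let f : ℝ^σ → ℝ ∪ {-∞}, not identically -∞. For u in the relative interior of dom f: f has no supporting hyperplane at u if and only if f is not concave at u, i.e., f(u) < f**(u) fails to hold as equality. -/

import Mathlib

open scoped RealInnerProductSpace

/-- The concave Legendre-Fenchel transform `f*(β) = inf_u {⟨β,u⟩ - f(u)}`. -/
noncomputable def concDual {σ : ℕ} (f : EuclideanSpace ℝ (Fin σ) → EReal)
    (β : EuclideanSpace ℝ (Fin σ)) : EReal :=
  ⨅ w : EuclideanSpace ℝ (Fin σ), ((⟪β, w⟫ : ℝ) : EReal) - f w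

/-- The double concave Legendre-Fenchel transform. -/
noncomputable def concBidual {σ : ℕ} (f : EuclideanSpace ℝ (Fin σ) → EReal)
    (u : EuclideanSpace ℝ (Fin σ)) : EReal :=
  ⨅ β : EuclideanSpace ℝ (Fin σ), ((⟪β, u⟫ : ℝ) : EReal) - concDual f β

lemma auxSubSub (a b : ℝ) (x : EReal) (hx : x ≠ ⊤) :
    (a : EReal) - ((b : EReal) - x) = ((a - b : ℝ) : EReal) + x := by
  induction x using EReal.rec with
  | bot => simp [EReal.coe_sub_bot, EReal.sub_top, EReal.add_bot]
  | coe r =>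
      rw [← EReal.coe_sub, ← EReal.coe_sub, ← EReal.coe_add, EReal.coe_eq_coe_iff]
      ring
  | top => exact absurd rfl hx

lemma auxSubSubCancel (a : ℝ) (x : EReal) : (a : EReal) - ((a : EReal) - x) = x := by
  induction x using EReal.rec with
  | bot => simp [EReal.coe_sub_bot, EReal.sub_top]
  | coe r =>
      rw [← EReal.coe_sub, ← EReal.coe_sub, EReal.coe_eq_coe_iff]; ring
  | top => simp [EReal.sub_top, EReal.coe_sub_bot]

lemma auxSubInf {ι : Type*} (a : ℝ) (g : ι → EReal) :
    (a : EReal) - ⨅ i, g i = ⨆ i, ((a : EReal) - g i) := by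
  apply le_antisymm
  · have h1 : (a : EReal) - ⨆ i, ((a : EReal) - g i) ≤ ⨅ i, g i := by
      refine le_iInf fun i => ?_
      calc (a : EReal) - ⨆ j, ((a : EReal) - g j) ≤ (a : EReal) - ((a : EReal) - g i) :=
            EReal.sub_le_sub le_rfl (le_iSup (fun j => (a : EReal) - g j) i)
        _ = g i := auxSubSubCancel a (g i)
    calc (a : EReal) - ⨅ i, g i
        ≤ (a : EReal) - ((a : EReal) - ⨆ i, ((a : EReal) - g i)) :=
          EReal.sub_le_sub le_rfl h1
      _ = ⨆ i, ((a : EReal) - g i) := auxSubSubCancel _ _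
  · exact iSup_le fun i => EReal.sub_le_sub le_rfl (iInf_le _ i)

lemma auxLeIff (φ c : ℝ) (x : EReal) (hx : x ≠ ⊤) :
    x ≤ (φ : EReal) + (c : EReal) ↔ ((-c : ℝ) : EReal) + x ≤ (φ : EReal) := by
  induction x using EReal.rec with
  | bot => simp [EReal.add_bot]
  | coe r =>
      rw [← EReal.coe_add, ← EReal.coe_add, EReal.coe_le_coe_iff, EReal.coe_le_coe_iff]
      constructor <;> intro <;> linarith
  | top => exact absurd rfl hx

set_option maxHeartbeats 1000000 in
/-- for `u` in the relative interior of `dom f`, `f` has no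
supporting hyperplane at `u` iff `f` is not concave at `u`, i.e. `f(u) < f**(u)`. -/
theorem no_supporting_hyperplane_iff_not_concave_at
    (σ : ℕ) (f : EuclideanSpace ℝ (Fin σ) → EReal)
    (hproper : ∃ w, f w ≠ ⊥) (htop : ∀ w, f w ≠ ⊤)
    (u : EuclideanSpace ℝ (Fin σ))
    (hu : u ∈ intrinsicInterior ℝ {w | f w ≠ ⊥}) :
    (¬ ∃ β : EuclideanSpace ℝ (Fin σ),
        ∀ v, f v ≤ f u + ((⟪β, v - u⟫ : ℝ) : EReal)) ↔
      f u < concBidual f u := by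
  classical
  set D : Set (EuclideanSpace ℝ (Fin σ)) := {w | f w ≠ ⊥} with hD
  have hfu_ne_bot : f u ≠ ⊥ := intrinsicInterior_subset hu
  obtain ⟨φ, hφ⟩ : ∃ φ : ℝ, f u = (φ : EReal) :=
    ⟨(f u).toReal, (EReal.coe_toReal (htop u) hfu_ne_bot).symm⟩
  set g : EuclideanSpace ℝ (Fin σ) → EuclideanSpace ℝ (Fin σ) → EReal :=
    fun w β => ((⟪β, u - w⟫ : ℝ) : EReal) + f w with hg
  set h : EuclideanSpace ℝ (Fin σ) → EReal := fun β => ⨆ w, g w β with hh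
  -- representation of the bidual via h
  have hrepr : ∀ β, ((⟪β, u⟫ : ℝ) : EReal) - concDual f β = h β := by
    intro β
    rw [concDual, auxSubInf]
    refine iSup_congr fun w => ?_
    rw [auxSubSub _ _ _ (htop w)]
    congr 2
    rw [inner_sub_right]
  have hbid : concBidual f u = ⨅ β, h β := iInf_congr hrepr
  -- supporting hyperplane iff h β ≤ f u
  have hsupp : ∀ β, (∀ v, f v ≤ f u + ((⟪β, v - u⟫ : ℝ) : EReal)) ↔ h β ≤ f u := by
    intro β
    rw [hh, iSup_le_iff]
    refine forall_congr' fun v => ?_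
    rw [hφ]
    show f v ≤ (φ : EReal) + ((⟪β, v - u⟫ : ℝ) : EReal) ↔
      ((⟪β, u - v⟫ : ℝ) : EReal) + f v ≤ (φ : EReal)
    have hiv : (⟪β, u - v⟫ : ℝ) = -(⟪β, v - u⟫ : ℝ) := by
      rw [inner_sub_right, inner_sub_right]; ring
    rw [hiv]
    exact auxLeIff φ _ (f v) (htop v)
  -- f u ≤ concBidual f u
  have hlb : f u ≤ concBidual f u := by
    rw [hbid]
    refine le_iInf fun β => ?_
    have hgu : g u β = f u := by
      simp [hg, sub_self, inner_zero_right]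
    calc f u = g u β := hgu.symm
      _ ≤ h β := le_iSup (fun w => g w β) u
  rw [lt_iff_not_ge, not_iff_not]
  constructor
  · rintro ⟨β, hβ⟩
    rw [hbid]
    exact le_trans (iInf_le _ β) ((hsupp β).1 hβ)
  · intro hle
    -- extract a relative neighborhood from the intrinsic interior hypothesis
    obtain ⟨y, hy, hyu⟩ := hu
    obtain ⟨ε, hε, hball⟩ := Metric.mem_nhds_iff.mp (mem_interior_iff_mem_nhds.mp hy)
    set V : Submodule ℝ (EuclideanSpace ℝ (Fin σ)) := (affineSpan ℝ D).direction with hV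
    have huD : u ∈ affineSpan ℝ D := hyu ▸ y.2
    have hdom : ∀ v : EuclideanSpace ℝ (Fin σ), v ∈ V → ‖v‖ < ε → f (u + v) ≠ ⊥ := by
      intro v hv hvn
      have hmem : u + v ∈ affineSpan ℝ D := by
        have := AffineSubspace.vadd_mem_of_mem_direction hv huD
        simpa [vadd_eq_add, add_comm] using this
      have hz : (⟨u + v, hmem⟩ : affineSpan ℝ D) ∈ Metric.ball y ε := by
        rw [Metric.mem_ball, Subtype.dist_eq]
        simpa [hyu, dist_eq_norm] using hvn
      exact hball hz
    have hsubV : ∀ w, f w ≠ ⊥ → u - w ∈ V := by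
      intro w hw
      have hwD : w ∈ affineSpan ℝ D := subset_affineSpan ℝ D hw
      simpa [vsub_eq_sub] using AffineSubspace.vsub_mem_direction huD hwD
    -- invariance of h under orthogonal projection onto V
    have hproj : ∀ β, h ((V.orthogonalProjectionOnto β : EuclideanSpace ℝ (Fin σ))) = h β := by
      intro β
      refine iSup_congr fun w => ?_
      by_cases hw : f w = ⊥
      · show ((⟪_, u - w⟫ : ℝ) : EReal) + f w = ((⟪β, u - w⟫ : ℝ) : EReal) + f w
        rw [hw, EReal.add_bot, EReal.add_bot]
      · have hz : u - w ∈ V := hsubV w hw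
        have h0 : (⟪β - (V.orthogonalProjectionOnto β : EuclideanSpace ℝ (Fin σ)), u - w⟫ : ℝ) = 0 := by
          have hm : β - (V.orthogonalProjectionOnto β : EuclideanSpace ℝ (Fin σ)) ∈ Vᗮ :=
            Submodule.sub_starProjection_mem_orthogonal (K := V) β
          have := (Submodule.mem_orthogonal V _).mp hm (u - w) hz
          rwa [real_inner_comm] at this
        have hinner : (⟪(V.orthogonalProjectionOnto β : EuclideanSpace ℝ (Fin σ)), u - w⟫ : ℝ)
            = (⟪β, u - w⟫ : ℝ) := by
          have := inner_sub_left (𝕜 := ℝ) β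
            ((V.orthogonalProjectionOnto β : EuclideanSpace ℝ (Fin σ))) (u - w)
          rw [h0] at this
          linarith
        show ((⟪_, u - w⟫ : ℝ) : EReal) + f w = ((⟪β, u - w⟫ : ℝ) : EReal) + f w
        rw [hinner]
    -- lower semicontinuity of h
    have hlsc : LowerSemicontinuous h := by
      refine lowerSemicontinuous_iSup fun w => ?_
      by_cases hw : f w = ⊥
      · have : g w = fun _ => (⊥ : EReal) := by
          funext β; rw [hg]; show ((⟪β, u - w⟫ : ℝ) : EReal) + f w = ⊥
          rw [hw, EReal.add_bot]
        rw [this]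
        exact lowerSemicontinuous_const
      · obtain ⟨r, hr⟩ : ∃ r : ℝ, f w = (r : EReal) :=
          ⟨(f w).toReal, (EReal.coe_toReal (htop w) hw).symm⟩
        have : g w = fun β => (((⟪β, u - w⟫ : ℝ) + r : ℝ) : EReal) := by
          funext β; rw [hg]
          show ((⟪β, u - w⟫ : ℝ) : EReal) + f w = _
          rw [hr, EReal.coe_add]
        rw [this]
        exact (continuous_coe_real_ereal.comp
          ((continuous_id.inner continuous_const).add continuous_const)).lowerSemicontinuous
    -- the uniform bound
    set c : ℝ := φ + 1 with hc
    have hbound : ∃ R : ℝ, ∀ β ∈ V, h β ≤ (c : EReal) → ‖β‖ ≤ R := by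
      have hkey : ∀ z : EuclideanSpace ℝ (Fin σ), z ∈ V → ‖z‖ < ε →
          ∀ β, h β ≤ (c : EReal) → (⟪β, -z⟫ : ℝ) + (f (u + z)).toReal ≤ c := by
        intro z hz hn β hβ
        have hb : f (u + z) ≠ ⊥ := hdom z hz hn
        have hfz : f (u + z) = (((f (u + z)).toReal : ℝ) : EReal) :=
          (EReal.coe_toReal (htop _) hb).symm
        have hgle : g (u + z) β ≤ (c : EReal) :=
          le_trans (le_iSup (fun w => g w β) (u + z)) hβ
        have h2 : u - (u + z) = -z := by abel
        have hgeq : g (u + z) β = (((⟪β, -z⟫ : ℝ) + (f (u + z)).toReal : ℝ) : EReal) := by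
          show ((⟪β, u - (u + z)⟫ : ℝ) : EReal) + f (u + z) = _
          conv_lhs => rw [h2, hfz]
          rw [EReal.coe_add]
        rw [hgeq] at hgle
        exact EReal.coe_le_coe_iff.mp hgle
      set b := stdOrthonormalBasis ℝ V with hb
      have hεn : ∀ i, ‖(ε / 2) • ((b i : EuclideanSpace ℝ (Fin σ)))‖ < ε ∧
          ‖(-(ε / 2)) • ((b i : EuclideanSpace ℝ (Fin σ)))‖ < ε := by
        intro i
        have h1 : ‖(b i : EuclideanSpace ℝ (Fin σ))‖ = 1 := by
          rw [Submodule.norm_coe]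
          exact b.orthonormal.1 i
        constructor
        · rw [norm_smul, h1, mul_one, Real.norm_eq_abs, abs_of_pos (by linarith)]
          linarith
        · rw [norm_smul, h1, mul_one, Real.norm_eq_abs, abs_neg, abs_of_pos (by linarith)]
          linarith
      refine ⟨∑ i, (2 / ε) * max (c - (f (u + (ε / 2) • ((b i : EuclideanSpace ℝ (Fin σ))))).toReal)
          (c - (f (u + (-(ε / 2)) • ((b i : EuclideanSpace ℝ (Fin σ))))).toReal), ?_⟩
      intro β hβV hβc
      have hcoord : ∀ i, |(⟪β, (b i : EuclideanSpace ℝ (Fin σ))⟫ : ℝ)| ≤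
          (2 / ε) * max (c - (f (u + (ε / 2) • ((b i : EuclideanSpace ℝ (Fin σ))))).toReal)
            (c - (f (u + (-(ε / 2)) • ((b i : EuclideanSpace ℝ (Fin σ))))).toReal) := by
        intro i
        set z := (b i : EuclideanSpace ℝ (Fin σ)) with hz
        have hzV : z ∈ V := (b i).2
        have hp := hkey ((ε / 2) • z) (V.smul_mem _ hzV) (hεn i).1 β hβc
        have hm := hkey ((-(ε / 2)) • z) (V.smul_mem _ hzV) (hεn i).2 β hβc
        rw [inner_neg_right, inner_smul_right] at hp hm
        set rp := (f (u + (ε / 2) • z)).toReal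
        set rm := (f (u + (-(ε / 2)) • z)).toReal
        set t := (⟪β, z⟫ : ℝ) with ht
        -- hp : -(ε/2 * t) + rp ≤ c ; hm : -(-(ε/2) * t) + rm ≤ c
        have h2ε : (0 : ℝ) < 2 / ε := by positivity
        have hεne : ε ≠ 0 := ne_of_gt hε
        have hmax1 : -((ε / 2) * t) ≤ max (c - rp) (c - rm) := by
          refine le_trans ?_ (le_max_left _ _); linarith
        have hmax2 : (ε / 2) * t ≤ max (c - rp) (c - rm) := by
          refine le_trans ?_ (le_max_right _ _); linarith
        have habs : |(ε / 2) * t| ≤ max (c - rp) (c - rm) := abs_le.2 ⟨by linarith, hmax2⟩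
        have habs2 : (ε / 2) * |t| ≤ max (c - rp) (c - rm) := by
          have h12 : |(ε / 2) * t| = (ε / 2) * |t| := by
            rw [abs_mul, abs_of_pos (by linarith : (0:ℝ) < ε / 2)]
          linarith [h12 ▸ habs]
        calc |t| = (2 / ε) * ((ε / 2) * |t|) := by field_simp
          _ ≤ (2 / ε) * max (c - rp) (c - rm) :=
            mul_le_mul_of_nonneg_left habs2 (le_of_lt h2ε)
      have hnorm : ‖β‖ ≤ ∑ i, |(⟪β, (b i : EuclideanSpace ℝ (Fin σ))⟫ : ℝ)| := by
        set βV : V := ⟨β, hβV⟩ with hβV'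
        have hrep : ∀ i, b.repr βV i = (⟪β, (b i : EuclideanSpace ℝ (Fin σ))⟫ : ℝ) := by
          intro i
          rw [b.repr_apply_apply, Submodule.coe_inner]
          exact real_inner_comm _ _
        calc ‖β‖ = ‖βV‖ := rfl
          _ = ‖∑ i, b.repr βV i • b i‖ := by rw [b.sum_repr]
          _ ≤ ∑ i, ‖b.repr βV i • b i‖ := norm_sum_le _ _
          _ = ∑ i, |(⟪β, (b i : EuclideanSpace ℝ (Fin σ))⟫ : ℝ)| := by
            refine Finset.sum_congr rfl fun i _ => ?_
            rw [norm_smul, Real.norm_eq_abs, hrep i, b.orthonormal.1 i, mul_one]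
      refine le_trans hnorm (Finset.sum_le_sum fun i _ => hcoord i)
    obtain ⟨R, hR⟩ := hbound
    -- a minimizing sequence, projected into V
    have hseq : ∀ n : ℕ, ∃ β, h β < ((φ + 1 / (n + 1) : ℝ) : EReal) := by
      intro n
      have h1 : concBidual f u < ((φ + 1 / (n + 1) : ℝ) : EReal) := by
        refine lt_of_le_of_lt hle ?_
        rw [hφ, EReal.coe_lt_coe_iff]
        have : (0 : ℝ) < 1 / (n + 1) := by positivity
        linarith
      rw [hbid] at h1
      exact iInf_lt_iff.mp h1
    choose β₀ hβ₀ using hseq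
    set γ : ℕ → EuclideanSpace ℝ (Fin σ) :=
      fun n => (V.orthogonalProjectionOnto (β₀ n) : EuclideanSpace ℝ (Fin σ)) with hγ
    have hγV : ∀ n, γ n ∈ V := fun n => (V.orthogonalProjectionOnto (β₀ n)).2
    have hγh : ∀ n, h (γ n) < ((φ + 1 / (n + 1) : ℝ) : EReal) := by
      intro n; rw [hγ]; rw [hproj]; exact hβ₀ n
    have hγc : ∀ n, h (γ n) ≤ (c : EReal) := by
      intro n
      refine le_trans (le_of_lt (hγh n)) ?_
      rw [EReal.coe_le_coe_iff, hc]
      have h1 : (1 : ℝ) / (n + 1) ≤ 1 := by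
        rw [div_le_one (by positivity)]
        simp
      linarith
    have hγR : ∀ n, γ n ∈ Metric.closedBall (0 : EuclideanSpace ℝ (Fin σ)) R := by
      intro n
      rw [Metric.mem_closedBall, dist_zero_right]
      exact hR (γ n) (hγV n) (hγc n)
    obtain ⟨βs, hβsmem, ψ, hψ, htend⟩ :=
      (isCompact_closedBall (0 : EuclideanSpace ℝ (Fin σ)) R).tendsto_subseq hγR
    -- the limit supports
    have hfinal : h βs ≤ f u := by
      by_contra hcon
      push_neg at hcon
      rw [hφ] at hcon
      obtain ⟨t, ht1, ht2⟩ := EReal.exists_between_coe_real hcon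
      have hev := hlsc βs ((t : ℝ) : EReal) ht2
      have hev2 := htend.eventually hev
      have ht1' : (φ : ℝ) < t := EReal.coe_lt_coe_iff.mp ht1
      obtain ⟨N, hN⟩ := exists_nat_one_div_lt (show (0:ℝ) < t - φ by linarith)
      obtain ⟨n, hn, hnt⟩ := (hev2.and (Filter.eventually_ge_atTop N)).exists
      have hψn : (N : ℝ) + 1 ≤ (ψ n : ℝ) + 1 := by
        have : N ≤ ψ n := le_trans hnt (StrictMono.le_apply hψ)
        exact_mod_cast Nat.succ_le_succ this
      have hfrac : (1 : ℝ) / (ψ n + 1) ≤ 1 / (N + 1) :=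
        one_div_le_one_div_of_le (by positivity) hψn
      have hlt : h (γ (ψ n)) < ((t : ℝ) : EReal) := by
        refine lt_of_lt_of_le (hγh (ψ n)) ?_
        rw [EReal.coe_le_coe_iff]
        have : (1 : ℝ) / (ψ n + 1) < t - φ := lt_of_le_of_lt hfrac hN
        linarith
      exact absurd hn (not_lt_of_gt hlt)
    exact ⟨βs, (hsupp βs).2 hfinal⟩
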